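/- Let β, x₁,…,x_d be independent indeterminates and work in the ring of formal power series over ℤ in these variables (where each 1+βx_i is invertible). Define the d×d matrix M̄ := ( (-1)^{d-i} ē_{d-i}^{(j)} )_{1≤i,j≤d}, where ē_p^{(j)} is the p-th elementary symmetric polynomial in the d-1 quantities x_i/(1+βx_i) for 1 ≤ i ≤ d, i ≠ j. Then det M̄ = ∏_{1≤i≤d} (1+βx_i)^{1-d} · ∏_{1≤i<j≤d} (x_i - x_j). -/

import Mathlib

open scoped BigOperators

namespace GrothDet

/-- Index type for the indeterminates: `β`, `x₁,…,x_d`, `b₁,b₂,…`. -/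
abbrev Idx (d : ℕ) := Unit ⊕ Fin d ⊕ ℕ

/-- The ambient ring: formal power series over `ℤ` in `β`, the `xᵢ` and the `bⱼ`. -/
abbrev R (d : ℕ) := MvPowerSeries (Idx d) ℤ

noncomputable def β (d : ℕ) : R d := MvPowerSeries.X (Sum.inl ())
noncomputable def x (d : ℕ) (i : Fin d) : R d := MvPowerSeries.X (Sum.inr (Sum.inl i))
noncomputable def b (d : ℕ) (ℓ : ℕ) : R d := MvPowerSeries.X (Sum.inr (Sum.inr ℓ))

/-- `x ⊕ y := x + y + βxy`. -/
noncomputable def oplus (d : ℕ) (u v : R d) : R d := u + v + β d * u * v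

/-- `[y|b]^k := (y ⊕ b₁)⋯(y ⊕ b_k)`. -/
noncomputable def fb (d : ℕ) (y : R d) (k : ℕ) : R d :=
  ∏ ℓ ∈ Finset.range k, oplus d y (b d ℓ)

/-- The multiplicative inverse of `1 + β * x j` (a unit since its constant term is `1`). -/
noncomputable def invOneAdd (d : ℕ) (j : Fin d) : R d :=
  MvPowerSeries.invOfUnit (1 + β d * x d j) 1

/-- `F^{(k)}(u) = ∏ᵢ (1+βxᵢ)/(1-xᵢu) · ∏_{ℓ=1}^k (1+(u+β)b_ℓ)` as a power series in `u`
over `R d`; here `(1-xᵢu)⁻¹ = ∑_n xᵢⁿ uⁿ`. -/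
noncomputable def F (d : ℕ) (k : ℕ) : PowerSeries (R d) :=
  (∏ i : Fin d,
      PowerSeries.C (1 + β d * x d i) * PowerSeries.mk fun n => x d i ^ n) *
    ∏ ℓ ∈ Finset.range k,
      (1 + (PowerSeries.X + PowerSeries.C (β d)) * PowerSeries.C (b d ℓ))

/-- `[u^t] F^{(k)}(u)`, extended by `0` in negative degrees `t`. -/
noncomputable def Fcoeff (d : ℕ) (k : ℕ) (t : ℤ) : R d :=
  if 0 ≤ t then PowerSeries.coeff t.toNat (F d k) else 0

/-- The sum `∑_{s≥0} f s` of a family of power series such that `β^s ∣ f s`: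
it is defined coefficientwise; on the coefficient of a monomial `n` only the
(finitely many) terms with `s ≤ n(β)` contribute, and the value is the limit of the
partial sums in the formal power series topology. -/
noncomputable def seriesSum (d : ℕ) (f : ℕ → R d) : R d :=
  (fun n => ∑ s ∈ Finset.range (n (Sum.inl ()) + 1), MvPowerSeries.coeff n (f s) :
    (Idx d →₀ ℕ) → ℤ)

/-- `G^{(k)}_m = ∑_{s≥0} (-β)^s [u^{m+s}] F^{(k)}(u)`. -/
noncomputable def G (d : ℕ) (k : ℕ) (m : ℤ) : R d :=
  seriesSum d fun s => (-β d) ^ s * Fcoeff d k (m + s)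

/-- The `p`-th elementary symmetric function of the family `f` restricted to `S`. -/
noncomputable def esym (d : ℕ) (S : Finset (Fin d)) (p : ℕ) (f : Fin d → R d) : R d :=
  ∑ t ∈ S.powersetCard p, ∏ i ∈ t, f i

/-- `x_i/(1+βx_i) = -x̄_i`. -/
noncomputable def xbar (d : ℕ) (i : Fin d) : R d := x d i * invOneAdd d i



section Aux
open Finset


variable {A : Type*} [CommRing A]

noncomputable def esym' {d : ℕ} (S : Finset (Fin d)) (p : ℕ) (f : Fin d → A) : A :=
  ∑ t ∈ S.powersetCard p, ∏ i ∈ t, f i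

lemma prod_sub_eq_sum_esym' {d : ℕ} (S : Finset (Fin d)) (v : Fin d → A) (t : A) :
    ∏ m ∈ S, (t - v m)
      = ∑ p ∈ Finset.range (S.card + 1), (-1) ^ p * esym' S p v * t ^ (S.card - p) := by
  have h0 : ∏ m ∈ S, (t - v m) = ∏ m ∈ S, ((-v m) + t) := by
    refine Finset.prod_congr rfl fun m _ => by ring
  rw [h0, Finset.prod_add, Finset.sum_powerset]
  refine Finset.sum_congr rfl fun p hp => ?_
  rw [esym', Finset.mul_sum, Finset.sum_mul]
  refine Finset.sum_congr rfl fun T hT => ?_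
  rw [Finset.mem_powersetCard] at hT
  obtain ⟨hTS, hTcard⟩ := hT
  have h1 : ∏ m ∈ T, (-v m) = (-1 : A) ^ p * ∏ m ∈ T, v m := by
    calc ∏ m ∈ T, (-v m) = ∏ m ∈ T, ((-1) * v m) := by simp
      _ = (∏ _m ∈ T, (-1 : A)) * ∏ m ∈ T, v m := Finset.prod_mul_distrib
      _ = (-1 : A) ^ p * ∏ m ∈ T, v m := by rw [Finset.prod_const, hTcard]
  rw [h1, Finset.prod_const, Finset.card_sdiff_of_subset hTS, hTcard]

noncomputable def Mmat {d : ℕ} (v : Fin d → A) : Matrix (Fin d) (Fin d) A :=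
  Matrix.of fun i j : Fin d =>
    (-1 : A) ^ (d - 1 - (i : ℕ)) * esym' (Finset.univ \ {j}) (d - 1 - (i : ℕ)) v

lemma card_compl_singleton {d : ℕ} (j : Fin d) :
    (Finset.univ \ {j} : Finset (Fin d)).card = d - 1 := by
  rw [Finset.card_sdiff_of_subset (by simp), Finset.card_univ, Fintype.card_fin, Finset.card_singleton]

lemma vandermonde_mul_entry {d : ℕ} (v : Fin d → A) (i j : Fin d) :
    (Matrix.vandermonde v * Mmat v) i j = ∏ m ∈ Finset.univ \ {j}, (v i - v m) := by
  have hd : 0 < d := i.pos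
  rw [prod_sub_eq_sum_esym', card_compl_singleton, Matrix.mul_apply]
  have hstep : ∀ k : Fin d,
      Matrix.vandermonde v i k * Mmat v k j
        = (fun k : ℕ => v i ^ k * ((-1 : A) ^ (d - 1 - k) *
            esym' (Finset.univ \ {j}) (d - 1 - k) v)) (k : ℕ) := by
    intro k
    simp only [Matrix.vandermonde, Matrix.of_apply, Mmat]
  rw [Finset.sum_congr rfl fun k _ => hstep k,
    Fin.sum_univ_eq_sum_range (fun k : ℕ => v i ^ k * ((-1 : A) ^ (d - 1 - k) *
            esym' (Finset.univ \ {j}) (d - 1 - k) v)) d]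
  have hd1 : d - 1 + 1 = d := Nat.succ_pred_eq_of_pos hd
  rw [hd1]
  rw [← Finset.sum_range_reflect
    (fun p : ℕ => (-1 : A) ^ p * esym' (Finset.univ \ {j}) p v * v i ^ (d - 1 - p)) d]
  refine Finset.sum_congr rfl fun k hk => ?_
  rw [Finset.mem_range] at hk
  have : d - 1 - (d - 1 - k) = k := Nat.sub_sub_self (by omega)
  rw [this]
  ring

lemma vandermonde_mul {d : ℕ} (v : Fin d → A) :
    Matrix.vandermonde v * Mmat v
      = Matrix.diagonal (fun j => ∏ m ∈ Finset.univ \ {j}, (v j - v m)) := by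
  ext i j
  rw [vandermonde_mul_entry]
  rcases eq_or_ne i j with rfl | h
  · simp
  · rw [Matrix.diagonal_apply_ne _ h]
    exact Finset.prod_eq_zero (by simp [h]) (sub_self _)


lemma detV_ne_zero (d : ℕ) :
    (Matrix.vandermonde (fun i : Fin d => (MvPolynomial.X i : MvPolynomial (Fin d) ℤ))).det ≠ 0 := by
  have h0 : (MvPolynomial.eval (fun k : Fin d => ((k : ℕ) : ℤ)))
      ((Matrix.vandermonde fun i : Fin d => (MvPolynomial.X i : MvPolynomial (Fin d) ℤ)).det)
        ≠ 0 := by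
    rw [Matrix.det_vandermonde]
    simp only [map_prod, map_sub, MvPolynomial.eval_X]
    refine Finset.prod_ne_zero_iff.mpr fun i _ => Finset.prod_ne_zero_iff.mpr fun j hj => ?_
    have hij : i < j := Finset.mem_Ioi.mp hj
    have hij' : (i : ℕ) < (j : ℕ) := hij
    exact sub_ne_zero.mpr (by exact_mod_cast hij'.ne')
  intro h
  rw [h, map_zero] at h0
  exact h0 rfl

lemma det_M_poly (d : ℕ) :
    (Mmat fun i : Fin d => (MvPolynomial.X i : MvPolynomial (Fin d) ℤ)).det
      = ∏ i : Fin d, ∏ j ∈ Finset.Ioi i,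
          ((MvPolynomial.X i : MvPolynomial (Fin d) ℤ) - MvPolynomial.X j) := by
  set v : Fin d → MvPolynomial (Fin d) ℤ := fun i => MvPolynomial.X i with hv
  apply mul_left_cancel₀ (detV_ne_zero d)
  rw [← Matrix.det_mul, vandermonde_mul, Matrix.det_diagonal]
  have hsplit : ∀ j : Fin d, ∏ m ∈ Finset.univ \ {j}, (v j - v m)
      = (∏ m ∈ Iio j, (v j - v m)) * ∏ m ∈ Ioi j, (v j - v m) := by
    intro j
    have hU : (Finset.univ \ {j} : Finset (Fin d)) = Iio j ∪ Ioi j := by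
      ext m
      simp only [Finset.mem_sdiff, Finset.mem_union, Finset.mem_Iio, Finset.mem_Ioi,
        Finset.mem_univ, true_and, Finset.mem_singleton]
      exact ne_iff_lt_or_gt
    rw [hU, Finset.prod_union (by
      rw [Finset.disjoint_left]
      intro m hm hm'
      exact absurd (Finset.mem_Iio.mp hm) (not_lt.mpr (Finset.mem_Ioi.mp hm').le))]
  rw [Finset.prod_congr rfl fun j _ => hsplit j, Finset.prod_mul_distrib,
    Matrix.det_vandermonde]
  congr 1
  exact Finset.prod_comm' (fun i j => by simp)

lemma det_M_gen {A : Type*} [CommRing A] (d : ℕ) (v : Fin d → A) :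
    (Mmat v).det = ∏ i : Fin d, ∏ j ∈ Finset.Ioi i, (v i - v j) := by
  let φ : MvPolynomial (Fin d) ℤ →+* A := MvPolynomial.eval₂Hom (Int.castRingHom A) v
  have h := congrArg φ (det_M_poly d)
  rw [RingHom.map_det, RingHom.mapMatrix_apply] at h
  have hmap : (Mmat fun i : Fin d => (MvPolynomial.X i : MvPolynomial (Fin d) ℤ)).map φ
      = Mmat v := by
    ext i j
    simp only [Matrix.map_apply, Mmat, Matrix.of_apply, esym', map_mul, map_pow, map_neg,
      map_one, map_sum, map_prod, MvPolynomial.eval₂Hom_X', φ]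
  rw [hmap] at h
  rw [h]
  simp only [map_prod, map_sub, MvPolynomial.eval₂Hom_X', φ]


lemma prod_pair_pow {A : Type*} [CommRing A] {d : ℕ} (f : Fin d → A) :
    ∏ i : Fin d, ∏ j ∈ Finset.Ioi i, (f i * f j) = ∏ i : Fin d, f i ^ (d - 1) := by
  have h1 : ∏ i : Fin d, ∏ j ∈ Finset.Ioi i, (f i * f j)
      = (∏ i : Fin d, f i ^ (Finset.Ioi i).card) * ∏ i : Fin d, ∏ j ∈ Finset.Ioi i, f j := by
    rw [← Finset.prod_mul_distrib]
    refine Finset.prod_congr rfl fun i _ => ?_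
    rw [Finset.prod_mul_distrib, Finset.prod_const]
  have h2 : ∏ i : Fin d, ∏ j ∈ Finset.Ioi i, f j = ∏ j : Fin d, f j ^ (j : ℕ) := by
    rw [Finset.prod_comm' (s := Finset.univ) (t := fun i : Fin d => Finset.Ioi i)
      (t' := Finset.univ) (s' := fun j : Fin d => Finset.Iio j) (fun i j => by simp)]
    refine Finset.prod_congr rfl fun j _ => ?_
    rw [Finset.prod_const, Fin.card_Iio]
  rw [h1, h2, ← Finset.prod_mul_distrib]
  refine Finset.prod_congr rfl fun i _ => ?_
  rw [← pow_add, Fin.card_Ioi]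
  congr 1
  have := i.isLt
  omega

end Aux

lemma xbar_sub (d : ℕ) (i j : Fin d) :
    xbar d i - xbar d j = (x d i - x d j) * (invOneAdd d i * invOneAdd d j) := by
  have hc : ∀ k : Fin d,
      MvPowerSeries.constantCoeff (1 + β d * x d k) = ((1 : ℤˣ) : ℤ) := by
    intro k
    simp [β, x]
  have hi : (1 + β d * x d i) * invOneAdd d i = 1 :=
    MvPowerSeries.mul_invOfUnit _ 1 (hc i)
  have hj : (1 + β d * x d j) * invOneAdd d j = 1 :=
    MvPowerSeries.mul_invOfUnit _ 1 (hc j)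
  unfold xbar
  linear_combination (x d j * invOneAdd d j) * hi - (x d i * invOneAdd d i) * hj

/-- `det M̄ = ∏_i (1+βx_i)^{1-d} · ∏_{i<j} (x_i - x_j)`. -/
theorem det_Mbar
    (d : ℕ) :
    Matrix.det (Matrix.of fun i j : Fin d =>
        (-1 : R d) ^ (d - 1 - (i : ℕ)) *
          esym d (Finset.univ \ {j}) (d - 1 - (i : ℕ)) (xbar d))
      = (∏ i : Fin d, invOneAdd d i ^ (d - 1)) *
          ∏ i : Fin d, ∏ j ∈ Finset.Ioi i, (x d i - x d j) := by
  have hM : (Matrix.of fun i j : Fin d =>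
      (-1 : R d) ^ (d - 1 - (i : ℕ)) *
        esym d (Finset.univ \ {j}) (d - 1 - (i : ℕ)) (xbar d)) = Mmat (xbar d) := rfl
  rw [hM, det_M_gen]
  calc ∏ i : Fin d, ∏ j ∈ Finset.Ioi i, (xbar d i - xbar d j)
      = ∏ i : Fin d, ∏ j ∈ Finset.Ioi i,
          ((invOneAdd d i * invOneAdd d j) * (x d i - x d j)) := by
        refine Finset.prod_congr rfl fun i _ => Finset.prod_congr rfl fun j _ => ?_
        rw [xbar_sub]
        ring
    _ = (∏ i : Fin d, ∏ j ∈ Finset.Ioi i, (invOneAdd d i * invOneAdd d j)) *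
          ∏ i : Fin d, ∏ j ∈ Finset.Ioi i, (x d i - x d j) := by
        simp only [Finset.prod_mul_distrib]
    _ = (∏ i : Fin d, invOneAdd d i ^ (d - 1)) *
          ∏ i : Fin d, ∏ j ∈ Finset.Ioi i, (x d i - x d j) := by
        rw [prod_pair_pow]

end GrothDet
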